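/- Let φ : S¹ → ℝ² be a continuous injective map and γ = range(φ) the corresponding Jordan curve. Then every connected component of the complement ℝ² ∖ γ has topological frontier (boundary) equal to γ. -/

import Mathlib

open Complex Metric Set Function

/-- A function into `ℂ` has a continuous logarithm. -/
def HasLog {X : Type*} [TopologicalSpace X] (f : X → ℂ) : Prop :=
  ∃ g : X → ℂ, Continuous g ∧ ∀ x, Complex.exp (g x) = f x

lemma hasLog_const {X : Type*} [TopologicalSpace X] {c : ℂ} (hc : c ≠ 0) :
    HasLog (fun _ : X => c) :=
  ⟨fun _ => Complex.log c, continuous_const, fun _ => Complex.exp_log hc⟩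

lemma mem_slitPlane_of_close {z : ℂ} (h : ‖z - 1‖ < 1) : z ∈ Complex.slitPlane := by
  rw [Complex.mem_slitPlane_iff]
  left
  have : |z.re - 1| ≤ ‖z - 1‖ := by
    have := Complex.abs_re_le_norm (z - 1)
    simpa using this
  have : |z.re - 1| < 1 := lt_of_le_of_lt this h
  linarith [abs_lt.mp this |>.1]

/-- If `f` is uniformly close to `g` (relative to `‖g‖`) and `g` has a continuous log,
then `f` has a continuous log. -/
lemma HasLog.of_close {X : Type*} [TopologicalSpace X] {f g : X → ℂ}
    (hf : Continuous f) (hg : Continuous g) (hcl : ∀ x, ‖f x - g x‖ < ‖g x‖)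
    (H : HasLog g) : HasLog f := by
  obtain ⟨L, hL, hLg⟩ := H
  have hg0 : ∀ x, g x ≠ 0 := by
    intro x hx
    have := hcl x; rw [hx] at this; simp at this
    exact absurd this (not_lt.mpr (norm_nonneg _))
  have hq : ∀ x, f x / g x - 1 = (f x - g x) / g x := fun x => by
    rw [sub_div, div_self (hg0 x)]
  have hmem : ∀ x, f x / g x ∈ Complex.slitPlane := by
    intro x
    apply mem_slitPlane_of_close
    rw [hq x, norm_div]
    rw [div_lt_one (by simpa [norm_pos_iff] using hg0 x)]
    exact hcl x
  refine ⟨fun x => L x + Complex.log (f x / g x), ?_, ?_⟩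
  · exact hL.add ((hf.div hg hg0).clog hmem)
  · intro x
    rw [Complex.exp_add, hLg, Complex.exp_log (div_ne_zero ?_ (hg0 x))]
    · rw [mul_div_cancel₀ _ (hg0 x)]
    · intro h0
      have := hcl x
      rw [show f x - g x = -g x by rw [h0]; ring] at this
      simp at this

/-- Homotopy invariance of existence of continuous logarithms, on a compact metric space. -/
lemma HasLog.of_homotopy {X : Type*} [MetricSpace X] [CompactSpace X] {H : ℝ → X → ℂ}
    (Hc : Continuous fun p : ℝ × X => H p.1 p.2)
    (Hne : ∀ s ∈ Set.Icc (0:ℝ) 1, ∀ x, H s x ≠ 0)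
    (h0 : HasLog (H 0)) : HasLog (H 1) := by
  classical
  rcases isEmpty_or_nonempty X with hX | hX
  · exact ⟨fun _ => 0, continuous_of_discreteTopology, fun x => isEmptyElim x⟩
  set K : Set (ℝ × X) := Set.Icc (0:ℝ) 1 ×ˢ Set.univ with hK
  have hKc : IsCompact K := (isCompact_Icc).prod isCompact_univ
  have hKne : K.Nonempty := ⟨⟨0, Classical.arbitrary X⟩, ⟨le_refl 0, zero_le_one⟩, trivial⟩
  -- minimum of ‖H‖ on K
  obtain ⟨p₀, hp₀K, hp₀'⟩ := hKc.exists_isMinOn hKne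
    (Hc.norm.continuousOn : ContinuousOn (fun p : ℝ × X => ‖H p.1 p.2‖) K)
  have hp₀ : ∀ p ∈ K, ‖H p₀.1 p₀.2‖ ≤ ‖H p.1 p.2‖ := fun p hp => hp₀' hp
  set m : ℝ := ‖H p₀.1 p₀.2‖ with hm
  have hm0 : 0 < m := by
    have := Hne p₀.1 hp₀K.1 p₀.2
    simpa [hm, norm_pos_iff] using this
  -- uniform continuity
  have hUC := hKc.uniformContinuousOn_of_continuous Hc.continuousOn
  rw [Metric.uniformContinuousOn_iff] at hUC
  obtain ⟨δ, hδ0, hδ⟩ := hUC m hm0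
  obtain ⟨n, hn⟩ := exists_nat_one_div_lt hδ0
  set N : ℕ := n + 1 with hN
  have hN0 : 0 < (N:ℝ) := by positivity
  have hNδ : 1 / (N:ℝ) < δ := by exact_mod_cast hn
  have key : ∀ k : ℕ, k ≤ N → HasLog (H ((k:ℝ)/N)) := by
    intro k hk
    induction k with
    | zero => simpa using h0
    | succ j ih =>
      have hjN : j ≤ N := Nat.le_of_succ_le hk
      have hLj := ih hjN
      have hjm : ((j:ℝ)/N) ∈ Set.Icc (0:ℝ) 1 := by
        constructor
        · positivity
        · rw [div_le_one hN0]; exact_mod_cast hjN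
      have hj1m : (((j+1:ℕ):ℝ)/N) ∈ Set.Icc (0:ℝ) 1 := by
        constructor
        · positivity
        · rw [div_le_one hN0]; exact_mod_cast hk
      refine HasLog.of_close ?_ ?_ ?_ hLj
      · exact Hc.comp (Continuous.prodMk continuous_const continuous_id)
      · exact Hc.comp (Continuous.prodMk continuous_const continuous_id)
      · intro x
        have hdist : dist ((((j+1:ℕ):ℝ)/N), x) (((j:ℝ)/N), x) < δ := by
          rw [Prod.dist_eq]
          simp only [dist_self]
          rw [max_eq_left dist_nonneg]
          rw [Real.dist_eq]
          have : ((j+1:ℕ):ℝ)/N - (j:ℝ)/N = 1/N := by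
            push_cast; ring
          rw [this, abs_of_pos (by positivity : (0:ℝ) < 1/(N:ℝ))]
          exact hNδ
        have h1 := hδ _ ⟨hj1m, trivial⟩ _ ⟨hjm, trivial⟩ hdist
        have h2 : m ≤ ‖H ((j:ℝ)/N) x‖ := hp₀ (((j:ℝ)/N), x) ⟨hjm, trivial⟩
        rw [dist_eq_norm] at h1
        calc ‖H (((j+1:ℕ):ℝ)/N) x - H ((j:ℝ)/N) x‖ < m := h1
          _ ≤ _ := h2
  have := key N le_rfl
  rwa [div_self (ne_of_gt hN0)] at this

lemma not_hasLog_sub_on_sphere {R : ℝ} (hR : 0 < R) {a : ℂ} (ha : ‖a‖ < R) :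
    ¬ HasLog (fun z : (Metric.sphere (0:ℂ) R : Set ℂ) => (z:ℂ) - a) := by
  rintro ⟨L, hLc, hL⟩
  have hmem : ∀ t : ℝ, (R:ℂ) * Complex.exp (t * I) ∈ Metric.sphere (0:ℂ) R := by
    intro t
    simp [Complex.norm_exp_ofReal_mul_I, abs_of_pos hR]
  set pt : ℝ → (Metric.sphere (0:ℂ) R : Set ℂ) := fun t => ⟨_, hmem t⟩ with hpt
  have hptc : Continuous pt := by
    apply Continuous.subtype_mk
    exact continuous_const.mul ((Complex.continuous_ofReal.mul continuous_const).cexp)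
  set w : ℝ → ℂ := fun t => 1 - a * Complex.exp (-(t:ℝ) * I) / R with hw
  have hwc : Continuous w := by
    apply continuous_const.sub
    exact (continuous_const.mul (((Complex.continuous_ofReal.neg).mul continuous_const).cexp)).div_const _
  have hwclose : ∀ t, ‖w t - 1‖ < 1 := by
    intro t
    have : w t - 1 = -(a * Complex.exp (-(t:ℝ) * I) / R) := by rw [hw]; ring
    rw [this, norm_neg, norm_div, norm_mul]
    have he : ‖Complex.exp (-(t:ℝ) * I)‖ = 1 := by
      rw [show (-(t:ℝ) * I : ℂ) = ((-t : ℝ) : ℂ) * I by push_cast; ring]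
      exact Complex.norm_exp_ofReal_mul_I _
    rw [he, mul_one]
    rw [div_lt_one (by simpa [abs_of_pos hR] using hR)]
    simpa [abs_of_pos hR] using ha
  have hwslit : ∀ t, w t ∈ Complex.slitPlane := fun t => mem_slitPlane_of_close (hwclose t)
  have hwne : ∀ t, w t ≠ 0 := fun t => Complex.slitPlane_ne_zero (hwslit t)
  set η : ℝ → ℂ := fun t =>
    L (pt t) - ((Real.log R : ℂ) + t * I + Complex.log (w t)) with hη
  have hηc : Continuous η := by
    apply Continuous.sub (hLc.comp hptc)
    apply Continuous.add
    · exact continuous_const.add (Complex.continuous_ofReal.mul continuous_const)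
    · exact hwc.clog hwslit
  have hηexp : ∀ t, Complex.exp (η t) = 1 := by
    intro t
    have hR0 : (R:ℂ) ≠ 0 := Complex.ofReal_ne_zero.mpr (ne_of_gt hR)
    have hLt := hL (pt t)
    simp only at hLt
    have h1 : Complex.exp ((Real.log R : ℂ) + t * I + Complex.log (w t))
        = R * Complex.exp (t * I) * w t := by
      rw [Complex.exp_add, Complex.exp_add, Complex.exp_log (hwne t)]
      congr 2
      rw [← Complex.ofReal_exp, Real.exp_log hR]
    have h2 : (R:ℂ) * Complex.exp (t * I) * w t = R * Complex.exp (t * I) - a := by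
      rw [hw]
      simp only
      rw [show (-(t:ℝ) * I : ℂ) = -(((t:ℝ):ℂ) * I) by ring, Complex.exp_neg]
      field_simp [Complex.exp_ne_zero]
    have hden : (R:ℂ) * Complex.exp (t * I) - a ≠ 0 := by
      rw [← h2]
      exact mul_ne_zero (mul_ne_zero hR0 (Complex.exp_ne_zero _)) (hwne t)
    have h3 : ((pt t : ℂ)) - a = R * Complex.exp (t * I) - a := rfl
    rw [hη]
    simp only
    rw [Complex.exp_sub, hLt, h1, h3, h2, div_self hden]
  have hηint : ∀ t, ∃ n : ℤ, η t = n * (2 * Real.pi * I) := fun t =>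
    Complex.exp_eq_one_iff.mp (hηexp t)
  -- the imaginary part is a continuous function with values in 2πℤ
  have hδ : η (2 * Real.pi) = η 0 - 2 * Real.pi * I := by
    have hpteq : pt (2 * Real.pi) = pt 0 := by
      apply Subtype.ext
      show (R:ℂ) * Complex.exp (((2 * Real.pi : ℝ):ℂ) * I) = (R:ℂ) * Complex.exp (((0:ℝ):ℂ) * I)
      congr 1
      rw [show (((2 * Real.pi : ℝ):ℂ) * I) = 2 * (Real.pi:ℂ) * I by push_cast; ring,
        Complex.exp_two_pi_mul_I]
      norm_num
    have hweq : w (2 * Real.pi) = w 0 := by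
      rw [hw]
      simp only
      congr 2
      rw [show (-((2 * Real.pi : ℝ):ℂ) * I) = (-1 : ℤ) * (2 * (Real.pi:ℂ) * I) by push_cast; ring,
        Complex.exp_int_mul_two_pi_mul_I]
      norm_num
    rw [hη]
    simp only
    rw [hpteq, hweq]
    push_cast
    ring
  -- parity contradiction via connectedness of ℝ
  have hcont : Continuous fun t => (η t).im := Complex.continuous_im.comp hηc
  have himage : IsPreconnected ((fun t => (η t).im) '' Set.univ) :=
    (isPreconnected_univ).image _ hcont.continuousOn
  have hy0 : (η 0).im ∈ (fun t => (η t).im) '' Set.univ := ⟨0, trivial, rfl⟩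
  have hy1 : (η 0).im - 2 * Real.pi ∈ (fun t => (η t).im) '' Set.univ := by
    refine ⟨2 * Real.pi, trivial, ?_⟩
    show (η (2 * Real.pi)).im = (η 0).im - 2 * Real.pi
    rw [hδ]
    simp [Complex.sub_im, Complex.mul_im, Complex.I_im, Complex.I_re]
  have hmid : (η 0).im - Real.pi ∈ Set.Icc ((η 0).im - 2 * Real.pi) ((η 0).im) := by
    constructor <;> [linarith [Real.pi_pos]; linarith [Real.pi_pos]]
  obtain ⟨t, -, ht⟩ := himage.Icc_subset hy1 hy0 hmid
  obtain ⟨n, hn⟩ := hηint t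
  obtain ⟨m, hm⟩ := hηint 0
  have htim : (η t).im = n * (2 * Real.pi) := by
    rw [hn]
    simp [Complex.mul_im, Complex.I_im, Complex.I_re]
  have h0im : (η 0).im = m * (2 * Real.pi) := by
    rw [hm]
    simp [Complex.mul_im, Complex.I_im, Complex.I_re]
  simp only at ht
  rw [htim, h0im] at ht
  have : ((2 * n : ℤ) : ℝ) * Real.pi = ((2 * m - 1 : ℤ) : ℝ) * Real.pi := by
    push_cast
    linarith
  have := mul_right_cancel₀ Real.pi_ne_zero this
  have : (2 * n : ℤ) = 2 * m - 1 := by exact_mod_cast this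
  omega

/-- A globally-defined nonvanishing continuous function has a continuous logarithm
on every sphere centered at `0`. -/
lemma hasLog_restrict_sphere {F : ℂ → ℂ} (hF : Continuous F) (hFne : ∀ z, F z ≠ 0) (R : ℝ) :
    HasLog (fun z : (Metric.sphere (0:ℂ) R : Set ℂ) => F z) := by
  have := HasLog.of_homotopy (X := (Metric.sphere (0:ℂ) R : Set ℂ))
    (H := fun s z => F (s • (z:ℂ)))
    (Hc := hF.comp (continuous_fst.smul (continuous_subtype_val.comp continuous_snd)))
    (Hne := fun s _ x => hFne _)
    (h0 := by
      show HasLog (fun z : (Metric.sphere (0:ℂ) R : Set ℂ) => F ((0:ℝ) • (z:ℂ)))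
      have : (fun z : (Metric.sphere (0:ℂ) R : Set ℂ) => F ((0:ℝ) • (z:ℂ)))
          = fun _ => F 0 := by
        funext z; rw [zero_smul]
      rw [this]
      exact hasLog_const (hFne 0))
  have h1 : (fun z : (Metric.sphere (0:ℂ) R : Set ℂ) => F ((1:ℝ) • (z:ℂ)))
      = fun z : (Metric.sphere (0:ℂ) R : Set ℂ) => F z := by
    funext z; rw [one_smul]
  rwa [h1] at this

/-- The frontier of a connected component of an open set avoids the open set. -/
lemma frontier_connectedComponentIn_subset {α : Type*} [TopologicalSpace α]
    [LocallyConnectedSpace α] {U : Set α} (hU : IsOpen U) (x : α) :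
    frontier (connectedComponentIn U x) ⊆ Uᶜ := by
  intro y hy
  by_contra hyU
  rw [Set.notMem_compl_iff] at hyU
  set C := connectedComponentIn U x with hC
  have hCopen : IsOpen C := hU.connectedComponentIn
  have hyC : y ∉ C := fun h => hy.2 (by rwa [hCopen.interior_eq])
  have hymem : y ∈ connectedComponentIn U y := mem_connectedComponentIn hyU
  have hopen' : IsOpen (connectedComponentIn U y) := hU.connectedComponentIn
  obtain ⟨z, hz1, hz2⟩ := mem_closure_iff.mp hy.1 _ hopen' hymem
  have : connectedComponentIn U y = C := by
    rw [connectedComponentIn_eq hz1]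
    exact (connectedComponentIn_eq hz2).symm
  exact hyC (this ▸ hymem)

/-- Key Borsuk-type lemma: if `a` lies in a *bounded* component of the complement of a compact
set `A`, `b` lies outside that component (and outside `A`), then `(z-a)/(z-b)` admits no
continuous logarithm on `A`. -/
lemma bounded_component_no_log {A : Set ℂ} (hA : IsCompact A) {a b : ℂ}
    (haA : a ∉ A) (hbA : b ∉ A)
    (hCb : Bornology.IsBounded (connectedComponentIn Aᶜ a))
    (hbC : b ∉ connectedComponentIn Aᶜ a)
    (h : ∃ h : A → ℂ, Continuous h ∧
      ∀ z : A, Complex.exp (h z) = ((z:ℂ) - a) / ((z:ℂ) - b)) : False := by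
  classical
  obtain ⟨l, hlc, hl⟩ := h
  set C := connectedComponentIn Aᶜ a with hCdef
  have haC : a ∈ C := mem_connectedComponentIn haA
  have hCopen : IsOpen C := hA.isClosed.isOpen_compl.connectedComponentIn
  have hfr : frontier C ⊆ A := by
    have := frontier_connectedComponentIn_subset (hA.isClosed.isOpen_compl) a
    rwa [compl_compl] at this
  have hbclC : b ∉ closure C := by
    rw [closure_eq_self_union_frontier]
    rintro (h | h)
    · exact hbC h
    · exact hbA (hfr h)
  -- Tietze extension of the logarithm
  obtain ⟨Hmap, hHmap⟩ := ContinuousMap.exists_restrict_eq (Y := ℂ) hA.isClosed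
    ⟨l, hlc⟩
  set HH : ℂ → ℂ := ⇑Hmap with hHH
  have hHHc : Continuous HH := Hmap.continuous
  have hHA : ∀ z : A, HH (z:ℂ) = l z := fun z => by
    have := DFunLike.congr_fun hHmap z
    simpa [ContinuousMap.restrict] using this
  -- the glued function
  set f₁ : ℂ → ℂ := fun z => (z - b) * Complex.exp (HH z) with hf₁
  set f₂ : ℂ → ℂ := fun z => z - a with hf₂
  set F : ℂ → ℂ := (closure C).piecewise f₁ f₂ with hF
  have hagree : ∀ z ∈ A, f₁ z = f₂ z := by
    intro z hz
    have hzb : z - b ≠ 0 := sub_ne_zero.mpr (by rintro rfl; exact hbA hz)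
    rw [hf₁, hf₂]
    simp only
    rw [hHA ⟨z, hz⟩, hl ⟨z, hz⟩]
    field_simp
  have hFc : Continuous F := by
    apply Continuous.piecewise
    · intro z hz
      exact hagree z (hfr (frontier_closure_subset hz))
    · exact (continuous_id.sub continuous_const).mul hHHc.cexp
    · exact continuous_id.sub continuous_const
  have hFne : ∀ z, F z ≠ 0 := by
    intro z
    rw [hF]
    by_cases hz : z ∈ closure C
    · rw [Set.piecewise_eq_of_mem _ _ _ hz, hf₁]
      exact mul_ne_zero (sub_ne_zero.mpr (by rintro rfl; exact hbclC hz))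
        (Complex.exp_ne_zero _)
    · rw [Set.piecewise_eq_of_notMem _ _ _ hz, hf₂]
      exact sub_ne_zero.mpr (by rintro rfl; exact hz (subset_closure haC))
  -- choose a big radius
  obtain ⟨r, hr⟩ := (hCb.closure.union hA.isBounded).subset_ball (0:ℂ)
  set R : ℝ := max r (‖a‖ + 1) with hR
  have hRpos : 0 < R := lt_of_lt_of_le (by positivity) (le_max_right _ _)
  have haR : ‖a‖ < R := lt_of_lt_of_le (by linarith) (le_max_right _ _)
  have hsphere : ∀ z : ℂ, z ∈ Metric.sphere (0:ℂ) R → z ∉ closure C := by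
    intro z hz hzC
    have h1 : z ∈ Metric.ball (0:ℂ) r := hr (Set.mem_union_left _ hzC)
    rw [Metric.mem_ball, dist_zero_right] at h1
    rw [Metric.mem_sphere, dist_zero_right] at hz
    have : R ≤ r := le_of_lt (hz ▸ h1)
    have : r ≤ R := le_max_left _ _
    linarith [hz ▸ h1, le_max_left r (‖a‖ + 1)]
  have hlog := hasLog_restrict_sphere hFc hFne R
  have : (fun z : (Metric.sphere (0:ℂ) R : Set ℂ) => F (z:ℂ))
      = fun z : (Metric.sphere (0:ℂ) R : Set ℂ) => (z:ℂ) - a := by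
    funext z
    rw [hF, Set.piecewise_eq_of_notMem _ _ _ (hsphere _ z.2), hf₂]
  rw [this] at hlog
  exact not_hasLog_sub_on_sphere hRpos haR hlog

/-- The complement of a closed ball in `ℂ` is preconnected. -/
lemma isPreconnected_compl_closedBall_complex {r : ℝ} (hr : 0 ≤ r) :
    IsPreconnected ((Metric.closedBall (0:ℂ) r)ᶜ) := by
  have hrank : 1 < Module.rank ℝ ℂ := by
    rw [Complex.rank_real_complex]
    norm_num
  have himg : (Metric.closedBall (0:ℂ) r)ᶜ
      = (fun p : ℝ × ℂ => p.1 • p.2) '' ((Set.Ioi r) ×ˢ (Metric.sphere (0:ℂ) 1)) := by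
    ext w
    simp only [Set.mem_compl_iff, Metric.mem_closedBall, dist_zero_right, not_le,
      Set.mem_image, Set.mem_prod, Set.mem_Ioi, Metric.mem_sphere]
    constructor
    · intro hw
      have hw0 : ‖w‖ ≠ 0 := (lt_of_le_of_lt hr hw).ne'
      refine ⟨⟨‖w‖, (‖w‖⁻¹ : ℝ) • w⟩, ⟨hw, ?_⟩, ?_⟩
      · show ‖(‖w‖⁻¹ : ℝ) • w‖ = 1
        rw [norm_smul, norm_inv, norm_norm, inv_mul_cancel₀ hw0]
      · show ‖w‖ • ((‖w‖⁻¹ : ℝ) • w) = w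
        rw [smul_smul, mul_inv_cancel₀ hw0, one_smul]
    · rintro ⟨⟨t, z⟩, ⟨ht, hz⟩, rfl⟩
      show r < ‖t • z‖
      rw [norm_smul, show ‖(t,z).2‖ = 1 from hz, mul_one, Real.norm_eq_abs,
        abs_of_pos (lt_of_le_of_lt hr ht)]
      exact ht
  rw [himg]
  apply IsPreconnected.image
  · exact (isPreconnected_Ioi.prod (isConnected_sphere hrank 0 zero_le_one).isPreconnected)
  · exact (continuous_fst.smul continuous_snd).continuousOn

/-- "Property L": every nonvanishing continuous function on `A` has a continuous logarithm. -/
def PropL (A : Set ℂ) : Prop :=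
  ∀ f : A → ℂ, Continuous f → (∀ x, f x ≠ 0) → HasLog f

/-- Eilenberg's criterion: if every nonvanishing continuous function on the compact set `A`
has a continuous logarithm, then the complement of `A` has a single connected component. -/
lemma connectedComponentIn_compl_eq_of_propL {A : Set ℂ} (hA : IsCompact A) (hL : PropL A)
    {a b : ℂ} (haA : a ∉ A) (hbA : b ∉ A) :
    connectedComponentIn Aᶜ a = connectedComponentIn Aᶜ b := by
  by_contra hne
  have hbC : b ∉ connectedComponentIn Aᶜ a := fun h => hne (connectedComponentIn_eq h)
  have haC' : a ∉ connectedComponentIn Aᶜ b := fun h => hne (connectedComponentIn_eq h).symm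
  -- continuous logarithms of (z - a) and (z - b) on A
  have hfa : HasLog (fun z : A => (z:ℂ) - a) := by
    apply hL _ (continuous_subtype_val.sub continuous_const)
    intro x hx
    simp only [Pi.sub_apply, sub_eq_zero] at hx
    exact haA (hx ▸ x.2)
  have hfb : HasLog (fun z : A => (z:ℂ) - b) := by
    apply hL _ (continuous_subtype_val.sub continuous_const)
    intro x hx
    simp only [Pi.sub_apply, sub_eq_zero] at hx
    exact hbA (hx ▸ x.2)
  obtain ⟨la, hlac, hla⟩ := hfa
  obtain ⟨lb, hlbc, hlb⟩ := hfb
  -- three cases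
  by_cases hCa : Bornology.IsBounded (connectedComponentIn Aᶜ a)
  · exact bounded_component_no_log hA haA hbA hCa hbC
      ⟨fun z => la z - lb z, hlac.sub hlbc, fun z => by
        rw [Complex.exp_sub, hla, hlb]⟩
  by_cases hCb : Bornology.IsBounded (connectedComponentIn Aᶜ b)
  · exact bounded_component_no_log hA hbA haA hCb haC'
      ⟨fun z => lb z - la z, hlbc.sub hlac, fun z => by
        rw [Complex.exp_sub, hla, hlb]⟩
  -- both components unbounded: they meet the connected complement of a big ball
  obtain ⟨r, hr⟩ := hA.isBounded.subset_ball (0:ℂ)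
  have hr0 : 0 ≤ max r 0 := le_max_right _ _
  set S : Set ℂ := (Metric.closedBall (0:ℂ) (max r 0))ᶜ with hS
  have hSpre : IsPreconnected S := isPreconnected_compl_closedBall_complex hr0
  have hSA : S ⊆ Aᶜ := by
    intro z hz
    rw [hS, Set.mem_compl_iff, Metric.mem_closedBall, dist_zero_right, not_le] at hz
    intro hzA
    have := hr hzA
    rw [Metric.mem_ball, dist_zero_right] at this
    have : ‖z‖ < max r 0 := lt_of_lt_of_le this (le_max_left _ _)
    linarith
  have hmeet : ∀ c : ℂ, c ∉ A → ¬ Bornology.IsBounded (connectedComponentIn Aᶜ c) →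
      S ⊆ connectedComponentIn Aᶜ c := by
    intro c hcA hcb
    have : ¬ connectedComponentIn Aᶜ c ⊆ Metric.closedBall (0:ℂ) (max r 0) := by
      intro hsub
      exact hcb ((Metric.isBounded_closedBall).subset hsub)
    obtain ⟨z, hz1, hz2⟩ := Set.not_subset.mp this
    have hzS : z ∈ S := hz2
    have hsub : S ⊆ connectedComponentIn Aᶜ z :=
      hSpre.subset_connectedComponentIn hzS hSA
    rwa [connectedComponentIn_eq hz1]
  have h1 := hmeet a haA hCa
  have h2 := hmeet b hbA hCb
  have hSne : S.Nonempty := by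
    refine ⟨(max r 0 + 1 : ℝ), ?_⟩
    rw [hS, Set.mem_compl_iff, Metric.mem_closedBall, dist_zero_right, not_le]
    have : ‖((max r 0 + 1 : ℝ) : ℂ)‖ = |max r 0 + 1| := by
      rw [Complex.norm_real, Real.norm_eq_abs]
    rw [this, abs_of_pos (by linarith)]
    linarith
  obtain ⟨z, hz⟩ := hSne
  exact hne ((connectedComponentIn_eq (h1 hz)).trans (connectedComponentIn_eq (h2 hz)).symm)

/-- An arc (injective continuous image of a compact interval) has property L. -/
lemma propL_arc {u v : ℝ} (huv : u ≤ v) {γ : ℝ → ℂ} (hc : ContinuousOn γ (Set.Icc u v))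
    (hi : Set.InjOn γ (Set.Icc u v)) : PropL (γ '' Set.Icc u v) := by
  intro f hf hfne
  haveI : CompactSpace (Set.Icc u v : Set ℝ) := isCompact_iff_compactSpace.mp isCompact_Icc
  have hφc : Continuous (fun t : (Set.Icc u v : Set ℝ) =>
      (⟨γ t, Set.mem_image_of_mem γ t.2⟩ : (γ '' Set.Icc u v : Set ℂ))) :=
    (continuousOn_iff_continuous_restrict.mp hc).subtype_mk _
  have hφbij : Function.Bijective (fun t : (Set.Icc u v : Set ℝ) =>
      (⟨γ t, Set.mem_image_of_mem γ t.2⟩ : (γ '' Set.Icc u v : Set ℂ))) := by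
    constructor
    · intro s t hst
      have : γ s = γ t := congrArg Subtype.val hst
      exact Subtype.ext (hi s.2 t.2 this)
    · rintro ⟨z, t, ht, rfl⟩
      exact ⟨⟨t, ht⟩, rfl⟩
  let e : (Set.Icc u v : Set ℝ) ≃ₜ (γ '' Set.Icc u v : Set ℂ) :=
    Continuous.homeoOfEquivCompactToT2 (f := Equiv.ofBijective _ hφbij) hφc
  have hec : Continuous ⇑e := e.continuous
  have key : HasLog (fun t : (Set.Icc u v : Set ℝ) =>
      f (e (Set.projIcc u v huv (u + 1 * ((t:ℝ) - u))))) := by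
    apply HasLog.of_homotopy
      (H := fun s (t : (Set.Icc u v : Set ℝ)) =>
        f (e (Set.projIcc u v huv (u + s * ((t:ℝ) - u)))))
    · apply hf.comp
      apply hec.comp
      apply continuous_projIcc.comp
      exact continuous_const.add (continuous_fst.mul
        ((continuous_subtype_val.comp continuous_snd).sub continuous_const))
    · intro s _ t
      exact hfne _
    · show HasLog fun t : (Set.Icc u v : Set ℝ) =>
        f (e (Set.projIcc u v huv (u + 0 * ((t:ℝ) - u))))
      have : (fun t : (Set.Icc u v : Set ℝ) =>
          f (e (Set.projIcc u v huv (u + 0 * ((t:ℝ) - u)))))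
          = fun _ => f (e (Set.projIcc u v huv u)) := by
        funext t; norm_num
      rw [this]
      exact hasLog_const (hfne _)
  have hkey : (fun t : (Set.Icc u v : Set ℝ) =>
      f (e (Set.projIcc u v huv (u + 1 * ((t:ℝ) - u)))))
      = fun t => f (e t) := by
    funext t
    congr 2
    have ht : u + 1 * ((t:ℝ) - u) = (t:ℝ) := by ring
    rw [ht, Set.projIcc_val]
  rw [hkey] at key
  obtain ⟨L, hLc, hL⟩ := key
  refine ⟨fun z => L (e.symm z), hLc.comp e.symm.continuous, ?_⟩
  intro z
  have := hL (e.symm z)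
  simp only at this ⊢
  rw [this, e.apply_symm_apply]

/-- The main theorem, over `ℂ`: every connected component of the complement of a Jordan curve
has frontier equal to the curve. -/
theorem jordan_frontier_complex (ψ : (Metric.sphere (0:ℂ) 1 : Set ℂ) → ℂ)
    (hψc : Continuous ψ) (hψi : Function.Injective ψ) :
    ∀ x ∈ (Set.range ψ)ᶜ,
      frontier (connectedComponentIn (Set.range ψ)ᶜ x) = Set.range ψ := by
  intro x hx
  haveI : CompactSpace (Metric.sphere (0:ℂ) 1 : Set ℂ) :=
    isCompact_iff_compactSpace.mp (isCompact_sphere 0 1)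
  set Γ : Set ℂ := Set.range ψ with hΓ
  have hΓcomp : IsCompact Γ := isCompact_range hψc
  have hΓcl : IsClosed Γ := hΓcomp.isClosed
  have hΓo : IsOpen Γᶜ := hΓcl.isOpen_compl
  set C := connectedComponentIn Γᶜ x with hC
  have hCopen : IsOpen C := hΓo.connectedComponentIn
  have hCsub : C ⊆ Γᶜ := connectedComponentIn_subset _ _
  have hfrsub : frontier C ⊆ Γ := by
    have := frontier_connectedComponentIn_subset hΓo x
    rwa [compl_compl] at this
  apply Set.Subset.antisymm hfrsub
  -- the hard inclusion: every point of the curve is in the frontier of C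
  intro p hp
  have hpnotint : p ∉ interior C := by
    rw [hCopen.interior_eq]
    intro h
    exact hCsub h hp
  refine ⟨?_, hpnotint⟩
  -- show p ∈ closure C ; suppose not
  by_contra hpcl
  obtain ⟨ε, hε, hball⟩ : ∃ ε > 0, ∀ z ∈ Metric.ball p ε, z ∉ C := by
    rw [Metric.mem_closure_iff] at hpcl
    push_neg at hpcl
    obtain ⟨ε, hε0, hεb⟩ := hpcl
    refine ⟨ε, hε0, fun z hz hzC => ?_⟩
    rw [Metric.mem_ball, dist_comm] at hz
    exact absurd hz (not_lt.mpr (hεb z hzC))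
  -- the point p lies on the curve: p = ψ a
  obtain ⟨a, rfl⟩ := hp
  set p := ψ a with hpdef
  -- circle parametrization through a
  have hanorm : ‖(a:ℂ)‖ = 1 := by
    have := a.2
    rwa [Metric.mem_sphere, dist_zero_right] at this
  have ha0 : (a:ℂ) ≠ 0 := by
    intro h
    rw [h, norm_zero] at hanorm
    norm_num at hanorm
  have hmem : ∀ t : ℝ, (a:ℂ) * Complex.exp (t * I) ∈ Metric.sphere (0:ℂ) 1 := by
    intro t
    rw [Metric.mem_sphere, dist_zero_right, norm_mul, hanorm, one_mul]
    exact Complex.norm_exp_ofReal_mul_I t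
  set cc : ℝ → (Metric.sphere (0:ℂ) 1 : Set ℂ) := fun t => ⟨_, hmem t⟩ with hcc
  have hccc : Continuous cc :=
    (continuous_const.mul ((Complex.continuous_ofReal.mul continuous_const).cexp)).subtype_mk _
  have hcc0 : cc 0 = a := by
    apply Subtype.ext
    show (a:ℂ) * Complex.exp ((0:ℝ) * I) = (a:ℂ)
    norm_num
  set g : ℝ → ℂ := fun t => ψ (cc t) with hg
  have hgc : Continuous g := hψc.comp hccc
  have hg0 : g 0 = p := by rw [hg]; simp only; rw [hcc0]
  -- injectivity of the parametrization modulo 2π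
  have hccinj : ∀ s t : ℝ, cc s = cc t → ∃ n : ℤ, s = t + 2 * Real.pi * n := by
    intro s t hst
    have h1 : (a:ℂ) * Complex.exp (s * I) = (a:ℂ) * Complex.exp (t * I) :=
      congrArg Subtype.val hst
    have h2 := mul_left_cancel₀ ha0 h1
    obtain ⟨n, hn⟩ := Complex.exp_eq_exp_iff_exists_int.mp h2
    refine ⟨n, ?_⟩
    have h3 : (s:ℂ) * I = ((t + 2 * Real.pi * n : ℝ) : ℂ) * I := by
      rw [hn]; push_cast; ring
    have h4 := mul_right_cancel₀ Complex.I_ne_zero h3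
    exact_mod_cast h4
  -- periodicity
  have hper : ∀ t : ℝ, g (t - 2 * Real.pi) = g t := by
    intro t
    rw [hg]
    simp only
    congr 1
    apply Subtype.ext
    show (a:ℂ) * Complex.exp (((t - 2 * Real.pi : ℝ):ℂ) * I)
      = (a:ℂ) * Complex.exp (((t:ℝ):ℂ) * I)
    congr 1
    rw [Complex.exp_eq_exp_iff_exists_int]
    exact ⟨-1, by push_cast; ring⟩
  -- surjectivity of the parametrization
  have hsurj : ∀ w : (Metric.sphere (0:ℂ) 1 : Set ℂ), ∃ t, 0 ≤ t ∧ t < 2 * Real.pi ∧ cc t = w := by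
    intro w
    have hwnorm : ‖(w:ℂ)‖ = 1 := by
      have := w.2
      rwa [Metric.mem_sphere, dist_zero_right] at this
    set z : ℂ := (w:ℂ) / (a:ℂ) with hz
    have hznorm : ‖z‖ = 1 := by
      rw [hz, norm_div]
      show ‖(w:ℂ)‖ / ‖(a:ℂ)‖ = 1
      rw [hwnorm, hanorm]; norm_num
    have hexp : Complex.exp (Complex.arg z * I) = z := by
      have := Complex.norm_mul_exp_arg_mul_I z
      rwa [hznorm, Complex.ofReal_one, one_mul] at this
    have harg1 := Complex.arg_le_pi z
    have harg2 := Complex.neg_pi_lt_arg z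
    by_cases hneg : 0 ≤ Complex.arg z
    · refine ⟨Complex.arg z, hneg, ?_, ?_⟩
      · linarith [Real.pi_pos]
      · apply Subtype.ext
        show (a:ℂ) * Complex.exp ((Complex.arg z : ℝ) * I) = (w:ℂ)
        rw [hexp, hz, mul_div_cancel₀ _ ha0]
    · push_neg at hneg
      refine ⟨Complex.arg z + 2 * Real.pi, by linarith [Real.pi_pos], by linarith, ?_⟩
      apply Subtype.ext
      show (a:ℂ) * Complex.exp (((Complex.arg z + 2 * Real.pi : ℝ):ℂ) * I) = (w:ℂ)
      have : Complex.exp (((Complex.arg z + 2 * Real.pi : ℝ):ℂ) * I)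
          = Complex.exp ((Complex.arg z : ℝ) * I) := by
        rw [Complex.exp_eq_exp_iff_exists_int]
        exact ⟨1, by push_cast; ring⟩
      rw [this, hexp, hz, mul_div_cancel₀ _ ha0]
  -- pick δ from continuity at 0
  obtain ⟨δ, hδ0, hδ⟩ := Metric.continuousAt_iff.mp hgc.continuousAt ε hε
  rw [hg0] at hδ
  set δ₀ : ℝ := min (δ/2) 1 with hδ₀
  have hδ₀pos : 0 < δ₀ := lt_min (by linarith) one_pos
  have hδ₀δ : δ₀ < δ := lt_of_le_of_lt (min_le_left _ _) (by linarith)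
  have hδ₀1 : δ₀ ≤ 1 := min_le_right _ _
  have hπ : (3:ℝ) < Real.pi := Real.pi_gt_three
  have hδ₀π : δ₀ < Real.pi := by linarith
  have hIcc : δ₀ ≤ 2 * Real.pi - δ₀ := by linarith
  -- the arc A
  set A : Set ℂ := g '' Set.Icc δ₀ (2 * Real.pi - δ₀) with hA
  have hginj : Set.InjOn g (Set.Icc δ₀ (2 * Real.pi - δ₀)) := by
    intro s hs t ht hst
    have hcs : cc s = cc t := hψi hst
    obtain ⟨n, hn⟩ := hccinj s t hcs
    have hbound : |s - t| < 2 * Real.pi := by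
      rw [abs_lt]
      constructor
      · have := hs.1; have := ht.2; nlinarith
      · have := hs.2; have := ht.1; nlinarith
    rw [hn] at hbound ⊢
    have : |2 * Real.pi * (n:ℝ)| < 2 * Real.pi := by
      rw [show t + 2 * Real.pi * (n:ℝ) - t = 2 * Real.pi * (n:ℝ) by ring] at hbound
      exact hbound
    rw [abs_mul, abs_of_pos (by positivity : (0:ℝ) < 2 * Real.pi)] at this
    have hnlt : |(n:ℝ)| < 1 := by
      nlinarith [abs_nonneg ((n:ℝ))]
    have : n = 0 := by
      have h1 : |n| < 1 := by exact_mod_cast hnlt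
      rcases abs_lt.mp h1 with ⟨ha, hb⟩
      omega
    rw [this]
    push_cast
    ring
  have hAL : PropL A := propL_arc hIcc hgc.continuousOn hginj
  have hAcomp : IsCompact A := (isCompact_Icc).image hgc
  have hAΓ : A ⊆ Γ := by
    rintro z ⟨t, -, rfl⟩
    exact ⟨cc t, rfl⟩
  -- Γ outside the ball is inside A
  have hcover : ∀ z ∈ Γ, z ∉ Metric.ball p ε → z ∈ A := by
    rintro z ⟨w, rfl⟩ hz
    obtain ⟨t, ht0, ht2, rfl⟩ := hsurj w
    by_cases htA : t ∈ Set.Icc δ₀ (2 * Real.pi - δ₀)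
    · exact ⟨t, htA, rfl⟩
    · exfalso
      apply hz
      rw [Set.mem_Icc, not_and_or, not_le, not_le] at htA
      rcases htA with h | h
      · have : dist t 0 < δ := by
          rw [Real.dist_eq, sub_zero, _root_.abs_of_nonneg ht0]
          linarith
        exact Metric.mem_ball.mpr (hδ this)
      · have hper' := hper t
        have : dist (t - 2 * Real.pi) 0 < δ := by
          rw [Real.dist_eq, sub_zero, abs_of_nonpos (by linarith)]
          linarith
        have := hδ this
        rw [hper'] at this
        exact Metric.mem_ball.mpr this
  -- p is not in A
  have hpA : p ∉ A := by
    rintro ⟨t, ht, hteq⟩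
    have : cc t = cc 0 := hψi (by rw [hg] at hteq; simpa [hg0, hcc0] using hteq)
    obtain ⟨n, hn⟩ := hccinj t 0 this
    rw [zero_add] at hn
    have ht1 := ht.1
    have ht2 := ht.2
    rcases lt_trichotomy n 0 with h | h | h
    · have hn1 : n ≤ -1 := by omega
      have : (n:ℝ) ≤ -1 := by exact_mod_cast hn1
      nlinarith
    · rw [h] at hn; push_cast at hn; rw [hn] at ht1; linarith
    · have : (1:ℝ) ≤ (n:ℝ) := by exact_mod_cast h
      nlinarith
  -- x is not in A
  have hxA : x ∉ A := fun h => hx (hAΓ h)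
  -- closure of C within Aᶜ stays in C
  have hclosC : ∀ z, z ∈ closure C → z ∉ A → z ∈ C := by
    intro z hz hzA
    by_contra hzC
    have : z ∈ frontier C := by
      rw [hCopen.frontier_eq]
      exact ⟨hz, hzC⟩
    have hzΓ : z ∈ Γ := hfrsub this
    have hzball : z ∉ Metric.ball p ε := by
      intro hzb
      -- ball is disjoint from C, hence from closure C
      obtain ⟨y, hy1, hy2⟩ := mem_closure_iff.mp hz _ Metric.isOpen_ball hzb
      exact hball y hy1 hy2
    exact hzA (hcover z hzΓ hzball)
  -- Eilenberg: all points of Aᶜ are in the same component of Aᶜ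
  have hEil := connectedComponentIn_compl_eq_of_propL hAcomp hAL hxA hpA
  set D : Set ℂ := connectedComponentIn Aᶜ x with hD
  have hxD : x ∈ D := mem_connectedComponentIn hxA
  have hpD : p ∈ D := by
    rw [hEil]
    exact mem_connectedComponentIn hpA
  have hDsub : D ⊆ Aᶜ := connectedComponentIn_subset _ _
  have hCD : C ⊆ D := by
    apply IsPreconnected.subset_connectedComponentIn
    · exact isPreconnected_connectedComponentIn
    · exact mem_connectedComponentIn hx
    · intro z hz
      exact fun hzA => (hCsub hz) (hAΓ hzA)
  have hDpre : IsPreconnected D := isPreconnected_connectedComponentIn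
  -- D is covered by the two disjoint opens C and (closure C)ᶜ
  have hcov : D ⊆ C ∪ (closure C)ᶜ := by
    intro z hz
    by_cases hzC : z ∈ C
    · exact Or.inl hzC
    · right
      intro hzcl
      exact hzC (hclosC z hzcl (fun h => (hDsub hz) h))
  have h1 : (D ∩ C).Nonempty := ⟨x, hxD, mem_connectedComponentIn hx⟩
  have h2 : (D ∩ (closure C)ᶜ).Nonempty := by
    refine ⟨p, hpD, ?_⟩
    intro hpclC
    obtain ⟨y, hy1, hy2⟩ := mem_closure_iff.mp hpclC _ Metric.isOpen_ball
      (Metric.mem_ball_self hε)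
    exact hball y hy1 hy2
  obtain ⟨z, hzD, hzC, hzCc⟩ := hDpre C (closure C)ᶜ hCopen (isClosed_closure).isOpen_compl
    hcov h1 h2
  exact hzCc (subset_closure hzC)

/-- Connected components in a set transform naturally under homeomorphisms (preimage form). -/
lemma Homeomorph.preimage_connectedComponentIn {X Y : Type*} [TopologicalSpace X]
    [TopologicalSpace Y] (h : X ≃ₜ Y) {F : Set Y} {x : X} (hx : h x ∈ F) :
    connectedComponentIn (⇑h ⁻¹' F) x = ⇑h ⁻¹' connectedComponentIn F (h x) := by
  have hsymm_img : ∀ (S : Set Y), ⇑h.symm '' S = ⇑h ⁻¹' S := by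
    intro S
    ext w
    constructor
    · rintro ⟨y, hy, rfl⟩
      simpa [h.apply_symm_apply] using hy
    · intro hw
      exact ⟨h w, hw, h.symm_apply_apply w⟩
  apply Set.Subset.antisymm
  · -- h '' (component) is preconnected in F
    have h1 : ⇑h '' connectedComponentIn (⇑h ⁻¹' F) x ⊆ connectedComponentIn F (h x) := by
      apply IsPreconnected.subset_connectedComponentIn
      · exact isPreconnected_connectedComponentIn.image _ h.continuous.continuousOn
      · exact ⟨x, mem_connectedComponentIn hx, rfl⟩
      · rw [Set.image_subset_iff]
        exact connectedComponentIn_subset _ _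
    intro z hz
    exact h1 ⟨z, hz, rfl⟩
  · -- h.symm '' (component of h x) is preconnected in h ⁻¹' F
    have h1 : ⇑h.symm '' connectedComponentIn F (h x) ⊆ connectedComponentIn (⇑h ⁻¹' F) x := by
      apply IsPreconnected.subset_connectedComponentIn
      · exact isPreconnected_connectedComponentIn.image _ h.symm.continuous.continuousOn
      · exact ⟨h x, mem_connectedComponentIn hx, h.symm_apply_apply x⟩
      · rw [hsymm_img]
        intro w hw
        rw [Set.mem_preimage] at hw ⊢
        exact connectedComponentIn_subset _ _ hw
    rw [hsymm_img] at h1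
    exact h1

/-- Every connected component of the complement of a Jordan curve `γ ⊆ ℝ²`
has topological frontier equal to `γ`. -/
theorem jordan_curve_frontier_of_components
    (φ : (Metric.sphere (0 : EuclideanSpace ℝ (Fin 2)) 1 : Set (EuclideanSpace ℝ (Fin 2))) →
        EuclideanSpace ℝ (Fin 2))
    (hφc : Continuous φ) (hφi : Function.Injective φ)
    (γ : Set (EuclideanSpace ℝ (Fin 2))) (hγ : γ = Set.range φ) :
    ∀ x ∈ γᶜ, frontier (connectedComponentIn γᶜ x) = γ := by
  intro x hx
  set e : ℂ ≃ₗᵢ[ℝ] EuclideanSpace ℝ (Fin 2) := Complex.orthonormalBasisOneI.repr with he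
  set h : ℂ ≃ₜ EuclideanSpace ℝ (Fin 2) := e.toHomeomorph with hh
  have hsphere : ∀ z : (Metric.sphere (0:ℂ) 1 : Set ℂ), h z ∈ Metric.sphere (0:EuclideanSpace ℝ (Fin 2)) 1 := by
    intro z
    have hz : ‖(z:ℂ)‖ = 1 := by
      have := z.2
      rwa [Metric.mem_sphere, dist_zero_right] at this
    rw [Metric.mem_sphere, dist_zero_right]
    show ‖e (z:ℂ)‖ = 1
    rw [e.norm_map]
    exact hz
  have hsphere' : ∀ w : (Metric.sphere (0:EuclideanSpace ℝ (Fin 2)) 1 : Set (EuclideanSpace ℝ (Fin 2))), h.symm w ∈ Metric.sphere (0:ℂ) 1 := by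
    intro w
    have hw : ‖(w:EuclideanSpace ℝ (Fin 2))‖ = 1 := by
      have := w.2
      rwa [Metric.mem_sphere, dist_zero_right] at this
    rw [Metric.mem_sphere, dist_zero_right]
    show ‖e.symm (w:EuclideanSpace ℝ (Fin 2))‖ = 1
    rw [e.symm.norm_map]
    exact hw
  set ψ : (Metric.sphere (0:ℂ) 1 : Set ℂ) → ℂ :=
    fun z => h.symm (φ ⟨h z, hsphere z⟩) with hψ
  have hψc : Continuous ψ := by
    apply h.symm.continuous.comp
    apply hφc.comp
    exact (h.continuous.comp continuous_subtype_val).subtype_mk _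
  have hψi : Function.Injective ψ := by
    intro z₁ z₂ hz
    have h1 := h.symm.injective hz
    have h2 := hφi h1
    have h3 : h (z₁ : ℂ) = h (z₂ : ℂ) := congrArg Subtype.val h2
    exact Subtype.ext (h.injective h3)
  have hrange : Set.range ψ = ⇑h ⁻¹' γ := by
    rw [hγ]
    ext z
    constructor
    · rintro ⟨w, rfl⟩
      show h (h.symm (φ _)) ∈ Set.range φ
      rw [h.apply_symm_apply]
      exact ⟨_, rfl⟩
    · rintro hz
      obtain ⟨w, hw⟩ := hz
      refine ⟨⟨h.symm w, hsphere' w⟩, ?_⟩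
      have hsub : (⟨h (h.symm (w : EuclideanSpace ℝ (Fin 2))),
          hsphere ⟨h.symm w, hsphere' w⟩⟩ :
          (Metric.sphere (0 : EuclideanSpace ℝ (Fin 2)) 1 :
            Set (EuclideanSpace ℝ (Fin 2)))) = w :=
        Subtype.ext (h.apply_symm_apply _)
      show h.symm (φ _) = z
      rw [hsub, hw, h.symm_apply_apply]
  have hx' : h.symm x ∈ (Set.range ψ)ᶜ := by
    rw [hrange]
    intro hc
    rw [Set.mem_preimage, h.apply_symm_apply] at hc
    exact hx hc
  have hmain := jordan_frontier_complex ψ hψc hψi (h.symm x) hx'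
  rw [hrange] at hmain
  have hcompl : (⇑h ⁻¹' γ)ᶜ = ⇑h ⁻¹' γᶜ := by
    rw [Set.preimage_compl]
  rw [hcompl] at hmain
  have hcc := h.preimage_connectedComponentIn
    (F := γᶜ) (x := h.symm x) (by rw [h.apply_symm_apply]; exact hx)
  rw [hcc, h.apply_symm_apply] at hmain
  rw [← h.preimage_frontier] at hmain
  exact (Set.preimage_eq_preimage h.surjective).mp hmain
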